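/- Let p be a prime, k ≥ 1, and a ∈ Z/pZ nonzero. Suppose ⟨a_1,...,a_k⟩ is a multiset of nonzero elements of Z/pZ such that no subset sums to a, and suppose there exist indices i, j with a_i ≢ ±a_j (mod p). Then this leads to a contradiction; i.e., all elements of the multiset lie in {b, −b} for some fixed b ∈ Z/pZ, b ≠ 0. -/

import Mathlib

open Finset

/-- The finset of subset sums of a multiset. -/
def msums {p : ℕ} (M : Multiset (ZMod p)) : Finset (ZMod p) :=
  (M.powerset.map Multiset.sum).toFinset

lemma mem_msums {p : ℕ} {M : Multiset (ZMod p)} {s : ZMod p} :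
    s ∈ msums M ↔ ∃ T, T ≤ M ∧ T.sum = s := by
  simp [msums, Multiset.mem_powerset]

lemma zero_mem_msums {p : ℕ} (M : Multiset (ZMod p)) : (0 : ZMod p) ∈ msums M :=
  mem_msums.2 ⟨0, Multiset.zero_le M, rfl⟩

lemma msums_mono {p : ℕ} {M N : Multiset (ZMod p)} (h : M ≤ N) : msums M ⊆ msums N := by
  intro s hs
  obtain ⟨T, hT, hTs⟩ := mem_msums.1 hs
  exact mem_msums.2 ⟨T, hT.trans h, hTs⟩

/-- A nonempty finset of `ZMod p`, `p` prime, closed under adding a nonzero `x`, is everything. -/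
lemma closed_eq_univ {p : ℕ} [NeZero p] (hp : p.Prime) {x : ZMod p} (hx : x ≠ 0)
    {T : Finset (ZMod p)} (hne : T.Nonempty) (hcl : ∀ t ∈ T, x + t ∈ T) :
    T = Finset.univ := by
  haveI : Fact p.Prime := ⟨hp⟩
  obtain ⟨t, ht⟩ := hne
  have key : ∀ n : ℕ, t + n • x ∈ T := by
    intro n
    induction n with
    | zero => simpa using ht
    | succ n ih =>
        have : t + (n + 1) • x = x + (t + n • x) := by
          push_cast [add_smul, one_smul]; ring
        rw [this]
        exact hcl _ ih
  apply Finset.eq_univ_iff_forall.2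
  intro z
  have h1 : t + (((z - t) * x⁻¹).val : ℕ) • x = z := by
    rw [nsmul_eq_mul, ZMod.natCast_val, ZMod.cast_id, mul_assoc, inv_mul_cancel₀ hx,
      mul_one]
    ring
  have := key ((z - t) * x⁻¹).val
  rwa [h1] at this

lemma step_grow {p : ℕ} (hp : p.Prime) {x : ZMod p} (hx : x ≠ 0) (N : Multiset (ZMod p)) :
    min p ((msums N).card + 1) ≤ (msums (x ::ₘ N)).card := by
  haveI : NeZero p := ⟨hp.ne_zero⟩
  have hsub : msums N ⊆ msums (x ::ₘ N) := msums_mono (Multiset.le_cons_self N x)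
  by_cases hcl : ∀ t ∈ msums N, x + t ∈ msums N
  · have hu := closed_eq_univ hp hx ⟨0, zero_mem_msums N⟩ hcl
    have hple : p ≤ (msums (x ::ₘ N)).card := by
      calc p = (msums N).card := by rw [hu, Finset.card_univ, ZMod.card]
      _ ≤ _ := Finset.card_le_card hsub
    exact le_trans (min_le_left _ _) hple
  · push_neg at hcl
    obtain ⟨t, ht, hxt⟩ := hcl
    have hxtmem : x + t ∈ msums (x ::ₘ N) := by
      obtain ⟨T, hT, hTs⟩ := mem_msums.1 ht
      exact mem_msums.2 ⟨x ::ₘ T, Multiset.cons_le_cons x hT, by simp [hTs]⟩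
    have hins : insert (x + t) (msums N) ⊆ msums (x ::ₘ N) := by
      intro z hz
      rcases Finset.mem_insert.1 hz with rfl | hz
      · exact hxtmem
      · exact hsub hz
    have := Finset.card_le_card hins
    rw [Finset.card_insert_of_notMem hxt] at this
    exact le_trans (min_le_right _ _) this

lemma grow {p : ℕ} (hp : p.Prime) (M : Multiset (ZMod p)) (B : Multiset (ZMod p))
    (h : ∀ z ∈ M, z ≠ 0) :
    min p (Multiset.card M + (msums B).card) ≤ (msums (M + B)).card := by
  induction M using Multiset.induction with
  | empty => simp
  | cons x M ih =>
      have hx : x ≠ 0 := h x (Multiset.mem_cons_self x M)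
      have h' : ∀ z ∈ M, z ≠ 0 := fun z hz => h z (Multiset.mem_cons_of_mem hz)
      have h1 := step_grow hp hx (M + B)
      have h2 := ih h'
      rw [Multiset.cons_add, Multiset.card_cons]
      omega

/-- For a multiset of p − 2 nonzero elements of ℤ/pℤ avoiding a ≠ 0,
all elements lie in {b, −b} for some fixed nonzero b. -/
theorem stmt_6 (p : ℕ) (hp : p.Prime) (a : ZMod p) (ha : a ≠ 0)
    (M : Multiset (ZMod p)) (hcard : M.card = p - 2)
    (hM0 : ∀ x ∈ M, x ≠ 0) (havoid : ∀ S ≤ M, S.sum ≠ a) :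
    ∃ b : ZMod p, b ≠ 0 ∧ ∀ x ∈ M, x = b ∨ x = -b := by
  haveI : Fact p.Prime := ⟨hp⟩
  rcases Multiset.empty_or_exists_mem M with hM | ⟨x, hxM⟩
  · exact ⟨a, ha, by simp [hM]⟩
  refine ⟨x, hM0 x hxM, ?_⟩
  by_contra hcon
  push_neg at hcon
  obtain ⟨y, hyM, hyx, hyxn⟩ := hcon
  -- y ∈ M.erase x since y ≠ x
  have hy' : y ∈ M.erase x := (Multiset.mem_erase_of_ne hyx).2 hyM
  set N := (M.erase x).erase y with hN
  have h1 : M = x ::ₘ M.erase x := (Multiset.cons_erase hxM).symm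
  have h2 : M.erase x = y ::ₘ N := (Multiset.cons_erase hy').symm
  have hMeq : N + ({x, y} : Multiset (ZMod p)) = M := by
    rw [h1, h2]
    show N + (x ::ₘ y ::ₘ 0) = x ::ₘ y ::ₘ N
    rw [Multiset.add_cons, Multiset.add_cons]
    simp
  have hx0 : x ≠ 0 := hM0 x hxM
  have hy0 : y ≠ 0 := hM0 y hyM
  have hxy0 : x + y ≠ 0 := by
    intro h
    exact hyxn (by linear_combination h)
  -- seed: {0, x, y, x+y} ⊆ msums {x, y}
  have m2 : x ∈ msums ({x, y} : Multiset (ZMod p)) :=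
    mem_msums.2 ⟨x ::ₘ 0, Multiset.cons_le_cons x (Multiset.zero_le _), by simp⟩
  have m3 : y ∈ msums ({x, y} : Multiset (ZMod p)) :=
    mem_msums.2 ⟨y ::ₘ 0, Multiset.le_cons_self _ _, by simp⟩
  have m4 : x + y ∈ msums ({x, y} : Multiset (ZMod p)) :=
    mem_msums.2 ⟨x ::ₘ y ::ₘ 0, le_refl _, by simp⟩
  have hseed : ({0, x, y, x + y} : Finset (ZMod p)) ⊆ msums ({x, y} : Multiset (ZMod p)) :=
    Finset.insert_subset (zero_mem_msums _) (Finset.insert_subset m2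
      (Finset.insert_subset m3 (Finset.singleton_subset_iff.2 m4)))
  have hym : y ∉ ({x + y} : Finset (ZMod p)) := by
    simp only [Finset.mem_singleton]
    intro h
    exact hx0 (right_eq_add.1 h)
  have hxm : x ∉ ({y, x + y} : Finset (ZMod p)) := by
    simp only [Finset.mem_insert, Finset.mem_singleton]
    push_neg
    exact ⟨fun h => hyx h.symm, fun h => hy0 (left_eq_add.1 h)⟩
  have h0m : (0 : ZMod p) ∉ ({x, y, x + y} : Finset (ZMod p)) := by
    simp only [Finset.mem_insert, Finset.mem_singleton]
    push_neg
    exact ⟨fun h => hx0 h.symm, fun h => hy0 h.symm, fun h => hxy0 h.symm⟩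
  have hseedcard : ({0, x, y, x + y} : Finset (ZMod p)).card = 4 := by
    rw [Finset.card_insert_of_notMem h0m, Finset.card_insert_of_notMem hxm,
      Finset.card_insert_of_notMem hym, Finset.card_singleton]
  have hseed4 : 4 ≤ (msums ({x, y} : Multiset (ZMod p))).card := by
    calc 4 = ({0, x, y, x + y} : Finset (ZMod p)).card := hseedcard.symm
    _ ≤ _ := Finset.card_le_card hseed
  have hNnz : ∀ z ∈ N, z ≠ 0 := fun z hz =>
    hM0 z (Multiset.mem_of_le ((Multiset.erase_le y _).trans (Multiset.erase_le x M)) hz)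
  have hNcard : Multiset.card N = p - 4 := by
    have hMcard2 : Multiset.card M = Multiset.card N + 2 := by
      rw [h1, h2]; simp
    have hp2 : 2 ≤ p := hp.two_le
    omega
  have hp4 : 4 ≤ p := by
    have hMcard2 : Multiset.card M = Multiset.card N + 2 := by
      rw [h1, h2]; simp
    have hp2 : 2 ≤ p := hp.two_le
    omega
  have hgrow := grow hp N ({x, y} : Multiset (ZMod p)) hNnz
  rw [hMeq] at hgrow
  have hcardge : p ≤ (msums M).card := by
    have : min p (Multiset.card N + 4) ≤ (msums M).card := by
      refine le_trans ?_ hgrow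
      have := hseed4
      omega
    omega
  have huniv : msums M = Finset.univ := by
    apply Finset.eq_univ_of_card
    haveI : NeZero p := ⟨hp.ne_zero⟩
    have hle : (msums M).card ≤ p := by
      have h := Finset.card_le_univ (msums M)
      rwa [ZMod.card] at h
    rw [ZMod.card]
    omega
  have : a ∈ msums M := huniv ▸ Finset.mem_univ a
  obtain ⟨T, hT, hTs⟩ := mem_msums.1 this
  exact havoid T hT hTs
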